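/- For every d ≥ 3, the coefficient a_0 = 4d·C(2d-2, d-1) - 4^d is strictly positive. -/
import Mathlib

theorem a0_positive (d : ℕ) (hd : 3 ≤ d) :
    (0 : ℝ) < 4 * d * Nat.choose (2 * d - 2) (d - 1) - 4 ^ d := by
  have key : 4 ^ d < 4 * d * Nat.choose (2 * d - 2) (d - 1) := by
    rcases eq_or_lt_of_le hd with h3 | h4
    · subst_vars; decide
    rcases eq_or_lt_of_le (Nat.succ_le_of_lt h4) with h4' | h5
    · subst h4'; decide
    · have h : 4 ≤ d - 1 := by omega
      have := Nat.four_pow_lt_mul_centralBinom (d - 1) h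
      have h2 : 2 * (d - 1) = 2 * d - 2 := by omega
      rw [Nat.centralBinom, h2] at this
      calc 4 ^ d = 4 * 4 ^ (d - 1) := by
            rw [← pow_succ']; congr 1; omega
        _ < 4 * ((d - 1) * Nat.choose (2 * d - 2) (d - 1)) := by
            exact (Nat.mul_lt_mul_left (by norm_num)).mpr this
        _ ≤ 4 * d * Nat.choose (2 * d - 2) (d - 1) := by
            rw [mul_assoc]
            exact Nat.mul_le_mul_left 4 (Nat.mul_le_mul_right _ (by omega))
  rw [sub_pos]
  exact_mod_cast key
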